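/- Let n ≥ 1 and let Δ = {x : Fin n → ℝ | (∀ i, x i ≥ 0) ∧ ∑ i, x i = 1} be the standard simplex on n vertices, and let ∂Δ = {x ∈ Δ | ∃ i, x i = 0} be its boundary, i.e., the union of the geometric realizations of the proper faces of Δ. There is no continuous map f : Δ → ∂Δ that maps each proper face into itself, i.e., no continuous f : Δ → Fin n → ℝ such that: (a) f(x) ∈ Δ for all x ∈ Δ; (b) for every x ∈ Δ there exists i with f(x) i = 0; and (c) for every x ∈ Δ and every i ∈ Fin n, x i = 0 implies f(x) i = 0. -/

import Mathlib

open Finset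


lemma card_modEq_filter_fixed {α : Type*} [DecidableEq α] (s : Finset α) (Φ : α → α)
    (h1 : ∀ a ∈ s, Φ a ∈ s) (h2 : ∀ a ∈ s, Φ (Φ a) = a) :
    s.card ≡ (s.filter fun a => Φ a = a).card [MOD 2] := by
  suffices H : ∀ N (s : Finset α), (∀ a ∈ s, Φ a ∈ s) → (∀ a ∈ s, Φ (Φ a) = a) → s.card ≤ N →
      s.card ≡ (s.filter fun a => Φ a = a).card [MOD 2] by
    exact H s.card s h1 h2 le_rfl
  clear h1 h2 s
  intro N
  induction N with
  | zero =>
    intro s h1 h2 hle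
    have : s = ∅ := Finset.card_eq_zero.mp (Nat.le_zero.mp hle)
    subst this; simp [Nat.ModEq]
  | succ N ih =>
  intro s h1 h2 hle
  by_cases hfix : ∀ a ∈ s, Φ a = a
  · rw [Finset.filter_true_of_mem hfix]
  push_neg at hfix
  obtain ⟨a, ha, hna⟩ := hfix
  have hΦa : Φ a ∈ s := h1 a ha
  set s' := (s.erase a).erase (Φ a) with hs'
  have hmem : ∀ b, b ∈ s' ↔ b ∈ s ∧ b ≠ a ∧ b ≠ Φ a := by
    intro b
    simp [hs', Finset.mem_erase, and_comm, and_left_comm]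
    tauto
  have hcard : s.card = s'.card + 2 := by
    have h1' : (s.erase a).card = s.card - 1 := Finset.card_erase_of_mem ha
    have h2' : s'.card = (s.erase a).card - 1 :=
      Finset.card_erase_of_mem (Finset.mem_erase.mpr ⟨hna, hΦa⟩)
    have : 1 ≤ s.card := Finset.card_pos.mpr ⟨a, ha⟩
    have : 2 ≤ s.card := by
      have : ({a, Φ a} : Finset α) ⊆ s := by
        intro x hx; simp at hx; rcases hx with rfl | rfl <;> assumption
      have hc : ({a, Φ a} : Finset α).card = 2 := by
        rw [Finset.card_insert_of_notMem (by simpa using fun h => hna h.symm)]; simp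
      calc 2 = ({a, Φ a} : Finset α).card := hc.symm
        _ ≤ s.card := Finset.card_le_card this
    omega
  have h1' : ∀ b ∈ s', Φ b ∈ s' := by
    intro b hb
    rw [hmem] at hb ⊢
    obtain ⟨hbs, hba, hbΦa⟩ := hb
    refine ⟨h1 b hbs, ?_, ?_⟩
    · intro h; exact hbΦa ((h2 b hbs).symm.trans (congrArg Φ h))
    · intro h
      have := congrArg Φ h
      rw [h2 b hbs, h2 a ha] at this
      exact hba this
  have h2' : ∀ b ∈ s', Φ (Φ b) = b := fun b hb => h2 b ((hmem b).mp hb).1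
  have hrec := ih s' h1' h2' (by omega)
  have hfilter : s'.filter (fun a => Φ a = a) = s.filter (fun a => Φ a = a) := by
    ext b
    simp only [Finset.mem_filter, hmem]
    constructor
    · tauto
    · rintro ⟨hbs, hb⟩
      refine ⟨⟨hbs, ?_, ?_⟩, hb⟩
      · rintro rfl; exact hna hb
      · rintro rfl; exact hna ((h2 a ha).symm.trans hb).symm
  rw [hcard, ← hfilter]
  exact Nat.ModEq.trans (show (s'.card + 2) % 2 = s'.card % 2 by omega) hrec

lemma door_count_parity (n : ℕ) (L : Fin (n+1) → ℕ) (hL : ∀ j, L j ≤ n) :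
    (Finset.univ.filter fun j : Fin (n+1) =>
        (Finset.univ.erase j).image L = Finset.range n).card
      ≡ (if Finset.univ.image L = Finset.range (n+1) then 1 else 0) [MOD 2] := by
  classical
  set P : Fin (n+1) → Prop := fun j => (Finset.univ.erase j).image L = Finset.range n with hP
  have hcard_erase : ∀ j : Fin (n+1), (Finset.univ.erase j).card = n := by
    intro j
    rw [Finset.card_erase_of_mem (Finset.mem_univ j)]
    simp
  have hinj : ∀ j, P j → Set.InjOn L (Finset.univ.erase j : Finset (Fin (n+1))) := by
    intro j hj
    rw [← Finset.card_image_iff]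
    rw [hj, Finset.card_range, hcard_erase]
  by_cases h : Finset.univ.image L = Finset.range (n+1)
  · rw [if_pos h]
    have hinj' : Function.Injective L := by
      have : Set.InjOn L (Finset.univ : Finset (Fin (n+1))) := by
        rw [← Finset.card_image_iff, h, Finset.card_range]
        simp
      intro a b hab
      exact this (by simp) (by simp) hab
    obtain ⟨j₀, -, hj₀⟩ : ∃ j₀ ∈ Finset.univ, L j₀ = n := by
      have : n ∈ Finset.univ.image L := by rw [h]; simp
      simpa using Finset.mem_image.mp this
    have : Finset.univ.filter P = {j₀} := by
      ext j
      simp only [Finset.mem_filter, Finset.mem_univ, true_and, Finset.mem_singleton]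
      constructor
      · intro hj
        by_contra hne
        have : (n : ℕ) ∈ Finset.range n := by
          rw [← hj]
          exact Finset.mem_image.mpr ⟨j₀, Finset.mem_erase.mpr ⟨fun hh => hne hh.symm,
            Finset.mem_univ _⟩, hj₀⟩
        simp at this
      · rintro rfl
        show (Finset.univ.erase _).image L = Finset.range n
        rw [Finset.image_erase hinj', h, hj₀, Finset.range_add_one,
          Finset.erase_insert (by simp)]
    rw [this]
    simp [Nat.ModEq]
  · rw [if_neg h]
    by_cases he : ∃ j, P j
    · obtain ⟨j, hj⟩ := he
      have hLj : L j < n := by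
        rcases Nat.lt_or_ge (L j) n with h' | h'
        · exact h'
        · exfalso
          have hLjn : L j = n := le_antisymm (hL j) h'
          apply h
          have huniv : (Finset.univ : Finset (Fin (n+1))) = insert j (Finset.univ.erase j) :=
            (Finset.insert_erase (Finset.mem_univ j)).symm
          rw [huniv, Finset.image_insert, hj, hLjn, ← Finset.range_add_one]
      obtain ⟨j', hj'mem, hj'⟩ : ∃ j' ∈ Finset.univ.erase j, L j' = L j := by
        have : L j ∈ Finset.range n := Finset.mem_range.mpr hLj
        rw [← hj] at this
        simpa using Finset.mem_image.mp this
      have hne : j' ≠ j := (Finset.mem_erase.mp hj'mem).1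
      have hPj' : P j' := by
        show (Finset.univ.erase j').image L = Finset.range n
        apply Finset.Subset.antisymm
        · intro c hc
          obtain ⟨k, hk, rfl⟩ := Finset.mem_image.mp hc
          have hkj' : k ≠ j' := (Finset.mem_erase.mp hk).1
          by_cases hkj : k = j
          · subst hkj
            rw [← hj'] at *
            rw [← hj]
            exact Finset.mem_image.mpr ⟨j', hj'mem, rfl⟩
          · rw [← hj]
            exact Finset.mem_image.mpr ⟨k, Finset.mem_erase.mpr ⟨hkj, Finset.mem_univ _⟩, rfl⟩
        · intro c hc
          rw [← hj] at hc
          obtain ⟨k, hk, rfl⟩ := Finset.mem_image.mp hc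
          have hkj : k ≠ j := (Finset.mem_erase.mp hk).1
          by_cases hkj' : k = j'
          · subst hkj'
            rw [hj', ← hj']
            exact Finset.mem_image.mpr ⟨j, Finset.mem_erase.mpr ⟨hne.symm ∘ Eq.symm ∘ Eq.symm,
              Finset.mem_univ _⟩, hj'.symm ▸ rfl⟩
          · exact Finset.mem_image.mpr ⟨k, Finset.mem_erase.mpr ⟨hkj', Finset.mem_univ _⟩, rfl⟩
      have hfilter : Finset.univ.filter P = {j, j'} := by
        ext jj
        simp only [Finset.mem_filter, Finset.mem_univ, true_and, Finset.mem_insert,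
          Finset.mem_singleton]
        constructor
        · intro hjj
          by_contra hcon
          push_neg at hcon
          obtain ⟨h1, h2⟩ := hcon
          have hjmem : j ∈ Finset.univ.erase jj :=
            Finset.mem_erase.mpr ⟨fun hh => h1 hh.symm, Finset.mem_univ _⟩
          have hj'mem2 : j' ∈ Finset.univ.erase jj :=
            Finset.mem_erase.mpr ⟨fun hh => h2 hh.symm, Finset.mem_univ _⟩
          exact hne (hinj jj hjj (by simpa using hj'mem2) (by simpa using hjmem) hj')
        · rintro (rfl | rfl)
          · exact hj
          · exact hPj'
      rw [hfilter]
      have : ({j, j'} : Finset (Fin (n+1))).card = 2 := by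
        rw [Finset.card_insert_of_notMem (by simpa using hne.symm ∘ Eq.symm ∘ Eq.symm)]
        simp
      rw [this]
      decide
    · have : Finset.univ.filter P = ∅ := by
        ext j; simp only [Finset.mem_filter, Finset.notMem_empty, iff_false]
        push_neg at he
        exact fun hh => he j hh.2
      rw [this]
      simp [Nat.ModEq]

theorem Equiv.Perm.apply_inv_self {α : Type*} (f : Equiv.Perm α) (x : α) : f (f⁻¹ x) = x :=
  Equiv.apply_symm_apply f x

theorem Equiv.Perm.inv_apply_self {α : Type*} (f : Equiv.Perm α) (x : α) : f⁻¹ (f x) = x :=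
  Equiv.symm_apply_apply f x

namespace KuhnDev

/-- Vertex `j` of the Kuhn room `(b, π)`. -/
def vert {n : ℕ} (R : (Fin n → ℕ) × Equiv.Perm (Fin n)) (j : Fin (n+1)) : Fin n → ℕ :=
  fun i => R.1 i + if ((R.2⁻¹ i : Fin n) : ℕ) < (j : ℕ) then 1 else 0

def rooms (p n : ℕ) : Finset ((Fin n → ℕ) × Equiv.Perm (Fin n)) :=
  (Fintype.piFinset fun _ => Finset.range p) ×ˢ Finset.univ

lemma mem_rooms {p n : ℕ} {R : (Fin n → ℕ) × Equiv.Perm (Fin n)} :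
    R ∈ rooms p n ↔ ∀ i, R.1 i < p := by
  simp [rooms, Fintype.mem_piFinset]

lemma vert_le {p n : ℕ} {R : (Fin n → ℕ) × Equiv.Perm (Fin n)} (hR : R ∈ rooms p n)
    (j : Fin (n+1)) (i : Fin n) : vert R j i ≤ p := by
  have := (mem_rooms.mp hR) i
  unfold vert
  split <;> omega

lemma vert_congr_lt {n : ℕ} (b : Fin n → ℕ) (π π' : Equiv.Perm (Fin n)) (j j' : Fin (n+1))
    (h : ∀ i, (((π')⁻¹ i : Fin n) : ℕ) < (j' : ℕ) ↔ ((π⁻¹ i : Fin n) : ℕ) < (j : ℕ)) :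
    vert (b, π') j' = vert (b, π) j := by
  funext i
  unfold vert
  simp only
  rw [if_congr (h i) rfl rfl]

/-- Interior pivot: swapping positions `j-1` and `j` does not change vertices other than `j`. -/
lemma vert_swap {n : ℕ} (b : Fin (n+1) → ℕ) (π : Equiv.Perm (Fin (n+1))) (j : Fin (n+2))
    (h0 : (j:ℕ) ≠ 0) (hN : (j:ℕ) ≠ n+1) (kk : Fin (n+2)) (hkk : kk ≠ j) :
    vert (b, π * Equiv.swap (⟨(j:ℕ)-1, by have := j.isLt; omega⟩ : Fin (n+1))
          (⟨(j:ℕ), by have := j.isLt; omega⟩ : Fin (n+1))) kk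
      = vert (b, π) kk := by
  set a : Fin (n+1) := ⟨(j:ℕ)-1, by have := j.isLt; omega⟩
  set a' : Fin (n+1) := ⟨(j:ℕ), by have := j.isLt; omega⟩
  apply vert_congr_lt
  intro i
  have hinv : (π * Equiv.swap a a')⁻¹ i = Equiv.swap a a' (π⁻¹ i) := by
    rw [mul_inv_rev, Equiv.Perm.mul_apply]
    congr 1
  rw [hinv]
  have hkj : (kk : ℕ) ≠ (j : ℕ) := fun h => hkk (Fin.ext h)
  rcases eq_or_ne (π⁻¹ i) a with ha | ha
  · rw [ha, Equiv.swap_apply_left]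
    show ((a' : ℕ) < (kk : ℕ)) ↔ ((a : ℕ) < (kk : ℕ))
    show ((j:ℕ) < (kk:ℕ)) ↔ ((j:ℕ)-1 < (kk:ℕ))
    omega
  rcases eq_or_ne (π⁻¹ i) a' with ha' | ha'
  · rw [ha', Equiv.swap_apply_right]
    show ((a : ℕ) < (kk : ℕ)) ↔ ((a' : ℕ) < (kk : ℕ))
    show ((j:ℕ)-1 < (kk:ℕ)) ↔ ((j:ℕ) < (kk:ℕ))
    omega
  · rw [Equiv.swap_apply_of_ne_of_ne ha ha']

/-- Bottom-to-top pivot. -/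
lemma vert_rot {n : ℕ} (b : Fin (n+1) → ℕ) (π : Equiv.Perm (Fin (n+1))) (kk : Fin (n+2))
    (hkk : kk ≠ Fin.last (n+1)) :
    vert (fun i => b i + if i = π 0 then 1 else 0, π * finRotate (n+1)) kk
      = vert (b, π) (kk+1) := by
  funext i
  have hkklt : (kk : ℕ) < n + 1 := by
    have := kk.isLt
    rcases Nat.lt_or_ge (kk : ℕ) (n+1) with h | h
    · exact h
    · exact absurd (Fin.ext (by omega : (kk:ℕ) = n+1)) hkk
  have hval : ((kk + 1 : Fin (n+2)) : ℕ) = (kk : ℕ) + 1 := by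
    rw [Fin.val_add_one_of_lt]
    exact Fin.lt_iff_val_lt_val.mpr (by simpa using hkklt)
  have hrotinv : ∀ u : Fin (n+1), (finRotate (n+1))⁻¹ u = u - 1 := by
    intro u
    have h : finRotate (n+1) (u - 1) = u := by
      rw [finRotate_succ_apply]
      exact sub_add_cancel u 1
    exact (Equiv.symm_apply_eq _).mpr h.symm
  set u : Fin (n+1) := π⁻¹ i with hu_def
  have hi : i = π u := (Equiv.Perm.apply_inv_self π i).symm
  have h1 : (π * finRotate (n+1))⁻¹ i = u - 1 := by
    rw [mul_inv_rev, Equiv.Perm.mul_apply]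
    rw [← hu_def, hrotinv]
  unfold vert
  simp only [h1, hval, ← hu_def]
  by_cases hu : u = 0
  · have hipi : i = π 0 := by rw [hi, hu]
    rw [if_pos hipi]
    have h2 : ((u - 1 : Fin (n+1)) : ℕ) = n := by
      rw [hu]
      simp [Fin.coe_sub_one]
    rw [h2, if_neg (by omega), hu, if_pos (by simp)]
  · have hipi : ¬ (i = π 0) := by
      intro h
      exact hu (by rw [hu_def, h, Equiv.Perm.inv_apply_self])
    rw [if_neg hipi, Nat.add_zero]
    have huv : (u : ℕ) ≠ 0 := fun h => hu (Fin.ext (by simpa using h))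
    have h2 : ((u - 1 : Fin (n+1)) : ℕ) = (u : ℕ) - 1 := by
      rw [Fin.coe_sub_one, if_neg hu]
    rw [h2, if_congr (show (u:ℕ) - 1 < (kk:ℕ) ↔ (u:ℕ) < (kk:ℕ) + 1 by omega) rfl rfl]

/-- Extend a permutation of `Fin k` to `Fin (k+1)` fixing the last element. -/
def permUp {k : ℕ} (σ : Equiv.Perm (Fin k)) : Equiv.Perm (Fin (k+1)) :=
  (finSuccEquivLast.trans σ.optionCongr).trans finSuccEquivLast.symm

@[simp] lemma permUp_castSucc {k : ℕ} (σ : Equiv.Perm (Fin k)) (a : Fin k) :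
    permUp σ (Fin.castSucc a) = Fin.castSucc (σ a) := by
  simp [permUp]

@[simp] lemma permUp_last {k : ℕ} (σ : Equiv.Perm (Fin k)) :
    permUp σ (Fin.last k) = Fin.last k := by
  simp [permUp]

lemma permUp_inv {k : ℕ} (σ : Equiv.Perm (Fin k)) : (permUp σ)⁻¹ = permUp σ⁻¹ := by
  apply Equiv.ext
  intro x
  refine Fin.lastCases ?_ ?_ x
  · rw [show (permUp σ)⁻¹ (Fin.last k) = Fin.last k from
      (Equiv.symm_apply_eq _).mpr (permUp_last σ).symm, permUp_last]
  · intro a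
    rw [permUp_castSucc]
    exact (Equiv.symm_apply_eq _).mpr (by rw [permUp_castSucc, Equiv.Perm.apply_inv_self])

def permDown {k : ℕ} (π : Equiv.Perm (Fin (k+1))) : Equiv.Perm (Fin k) :=
  Equiv.removeNone ((finSuccEquivLast.symm.trans π).trans finSuccEquivLast)

lemma permUp_permDown {k : ℕ} {π : Equiv.Perm (Fin (k+1))} (h : π (Fin.last k) = Fin.last k) :
    permUp (permDown π) = π := by
  set e := (finSuccEquivLast.symm.trans π).trans finSuccEquivLast with he
  apply Equiv.ext
  intro x
  refine Fin.lastCases ?_ ?_ x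
  · rw [permUp_last, h]
  · intro a
    rw [permUp_castSucc]
    have hne : π (Fin.castSucc a) ≠ Fin.last k := by
      intro hcon
      have := π.injective (hcon.trans h.symm)
      exact absurd this (Fin.castSucc_lt_last a).ne
    obtain ⟨c, hc⟩ := Fin.exists_castSucc_eq.mpr hne
    have hesome : e (some a) = some c := by
      simp only [he, Equiv.trans_apply, finSuccEquivLast_symm_some, ← hc,
        finSuccEquivLast_castSucc]
    have h2 := Equiv.removeNone_some (e := e) ⟨c, hesome⟩
    rw [hesome] at h2
    have h3 : Equiv.removeNone e a = c := Option.some_injective _ h2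
    have h4 : permDown π a = c := h3
    rw [h4, hc]

lemma permDown_permUp {k : ℕ} (σ : Equiv.Perm (Fin k)) : permDown (permUp σ) = σ := by
  have : (finSuccEquivLast.symm.trans (permUp σ)).trans finSuccEquivLast = σ.optionCongr := by
    apply Equiv.ext
    intro x
    cases x with
    | none => simp [permUp]
    | some a => simp [permUp]
  rw [permDown, this, Equiv.removeNone_optionCongr]

lemma vert_snoc {k : ℕ} (b' : Fin k → ℕ) (σ : Equiv.Perm (Fin k)) (j : Fin (k+1)) :
    vert (Fin.snoc b' 0, permUp σ) (Fin.castSucc j) = Fin.snoc (vert (b', σ) j) 0 := by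
  funext i
  refine Fin.lastCases ?_ ?_ i
  · simp only [vert, Fin.snoc_last, permUp_inv, permUp_last, Fin.val_last, Fin.coe_castSucc]
    have := j.isLt
    rw [if_neg (by omega)]
  · intro a
    simp only [vert, Fin.snoc_castSucc, permUp_inv, permUp_castSucc, Fin.coe_castSucc]

lemma erase_last_eq_image_castSucc {m : ℕ} :
    (Finset.univ.erase (Fin.last m)) = (Finset.univ : Finset (Fin m)).image Fin.castSucc := by
  ext x
  simp only [Finset.mem_erase, Finset.mem_univ, and_true, Finset.mem_image, true_and]
  rw [← Fin.exists_castSucc_eq]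

lemma sum_modEq {α : Type*} (s : Finset α) (f g : α → ℕ)
    (h : ∀ a ∈ s, f a ≡ g a [MOD 2]) : ∑ a ∈ s, f a ≡ ∑ a ∈ s, g a [MOD 2] := by
  unfold Nat.ModEq
  rw [Finset.sum_nat_mod s 2 f, Finset.sum_nat_mod s 2 g, Finset.sum_congr rfl h]

lemma door_image_rot {k : ℕ} (ℓ : (Fin (k+1) → ℕ) → ℕ) (b : Fin (k+1) → ℕ)
    (π : Equiv.Perm (Fin (k+1))) :
    (Finset.univ.erase (Fin.last (k+1))).image
      (fun kk => ℓ (vert ((fun i => b i + if i = π 0 then 1 else 0), π * finRotate (k+1)) kk))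
    = (Finset.univ.erase (0 : Fin (k+2))).image (fun kk => ℓ (vert (b, π) kk)) := by
  have hinj : Function.Injective (fun kk : Fin (k+2) => kk + 1) := add_left_injective 1
  have hbij : (Finset.univ.erase (0 : Fin (k+2))) =
      (Finset.univ.erase (Fin.last (k+1))).image (fun kk => kk + 1) := by
    rw [Finset.image_erase hinj, Fin.last_add_one]
    congr 1
    exact (Finset.image_univ_of_surjective (fun y => ⟨y - 1, by simp⟩)).symm
  rw [hbij, Finset.image_image]
  apply Finset.image_congr
  intro kk hkk
  simp only [Function.comp_apply]
  exact congrArg ℓ (vert_rot b π kk (by simpa using hkk))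


lemma finRotate_inv_apply {m : ℕ} (u : Fin (m+1)) : (finRotate (m+1))⁻¹ u = u - 1 := by
  have h : finRotate (m+1) (u - 1) = u := by
    rw [finRotate_succ_apply]
    exact sub_add_cancel u 1
  exact (Equiv.symm_apply_eq _).mpr h.symm

lemma zero_sub_one_eq_last {m : ℕ} : (0 : Fin (m+1)) - 1 = Fin.last m := by
  apply Fin.ext
  rw [Fin.coe_sub_one]
  simp

/-- The pivot involution on pairs (room, omitted-vertex-index). -/
def flip (p : ℕ) {k : ℕ} (x : ((Fin (k+1) → ℕ) × Equiv.Perm (Fin (k+1))) × Fin (k+2)) :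
    ((Fin (k+1) → ℕ) × Equiv.Perm (Fin (k+1))) × Fin (k+2) :=
  if h0 : (x.2 : ℕ) = 0 then
    (if x.1.1 (x.1.2 0) + 1 < p then
      (((fun i => x.1.1 i + if i = x.1.2 0 then 1 else 0), x.1.2 * finRotate (k+1)),
        Fin.last (k+1))
    else x)
  else if hN : (x.2 : ℕ) = k+1 then
    (if 0 < x.1.1 (x.1.2 (Fin.last k)) then
      (((fun i => x.1.1 i - if i = x.1.2 (Fin.last k) then 1 else 0),
        x.1.2 * (finRotate (k+1))⁻¹), 0)
    else x)
  else (((x.1.1, x.1.2 * Equiv.swap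
      (⟨(x.2:ℕ)-1, by have := x.2.isLt; omega⟩ : Fin (k+1))
      (⟨(x.2:ℕ), by have := x.2.isLt; omega⟩ : Fin (k+1)))), x.2)

lemma flip_zero (p : ℕ) {k : ℕ} (x : ((Fin (k+1) → ℕ) × Equiv.Perm (Fin (k+1))) × Fin (k+2))
    (h0 : (x.2 : ℕ) = 0) :
    flip p x = (if x.1.1 (x.1.2 0) + 1 < p then
      (((fun i => x.1.1 i + if i = x.1.2 0 then 1 else 0), x.1.2 * finRotate (k+1)),
        Fin.last (k+1))
    else x) := by
  unfold flip
  rw [dif_pos h0]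

lemma flip_last (p : ℕ) {k : ℕ} (x : ((Fin (k+1) → ℕ) × Equiv.Perm (Fin (k+1))) × Fin (k+2))
    (hN : (x.2 : ℕ) = k+1) :
    flip p x = (if 0 < x.1.1 (x.1.2 (Fin.last k)) then
      (((fun i => x.1.1 i - if i = x.1.2 (Fin.last k) then 1 else 0),
        x.1.2 * (finRotate (k+1))⁻¹), 0)
    else x) := by
  unfold flip
  rw [dif_neg (by omega), dif_pos hN]

lemma flip_mid (p : ℕ) {k : ℕ} (x : ((Fin (k+1) → ℕ) × Equiv.Perm (Fin (k+1))) × Fin (k+2))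
    (h0 : (x.2 : ℕ) ≠ 0) (hN : (x.2 : ℕ) ≠ k+1) :
    flip p x = (((x.1.1, x.1.2 * Equiv.swap
      (⟨(x.2:ℕ)-1, by have := x.2.isLt; omega⟩ : Fin (k+1))
      (⟨(x.2:ℕ), by have := x.2.isLt; omega⟩ : Fin (k+1)))), x.2) := by
  unfold flip
  rw [dif_neg h0, dif_neg hN]


lemma door_image_snoc {k : ℕ} (ℓ : (Fin (k+1) → ℕ) → ℕ) (b' : Fin k → ℕ)
    (σ : Equiv.Perm (Fin k)) :
    (Finset.univ.erase (Fin.last (k+1))).image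
        (fun kk => ℓ (vert (Fin.snoc b' 0, permUp σ) kk))
      = Finset.univ.image (fun j : Fin (k+1) => ℓ (Fin.snoc (vert (b', σ) j) 0)) := by
  rw [erase_last_eq_image_castSucc, Finset.image_image]
  apply Finset.image_congr
  intro j _
  simp only [Function.comp_apply]
  rw [vert_snoc]

theorem kuhn_odd (p : ℕ) (hp : 1 ≤ p) (n : ℕ) :
    ∀ (ℓ : (Fin n → ℕ) → ℕ),
    (∀ x, (∀ i, x i ≤ p) → ℓ x ≤ n) →
    (∀ x, (∀ i, x i ≤ p) → ∀ i : Fin n, x i = 0 → ℓ x ≤ (i:ℕ)) →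
    (∀ x, (∀ i, x i ≤ p) → ∀ i : Fin n, x i = p → ℓ x ≠ (i:ℕ)) →
    Odd ((rooms p n).filter
      (fun R => Finset.univ.image (fun j => ℓ (vert R j)) = Finset.range (n+1))).card := by
  induction n with
  | zero =>
    intro ℓ hC0 _ _
    have hall : ∀ R ∈ rooms p 0,
        Finset.univ.image (fun j => ℓ (vert R j)) = Finset.range 1 := by
      intro R _
      have h0 : ∀ j : Fin 1, ℓ (vert R j) = 0 := fun j =>
        Nat.le_zero.mp (hC0 (vert R j) (fun i => i.elim0))
      rw [show (Finset.univ : Finset (Fin 1)) = {0} from rfl, Finset.image_singleton, h0,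
        Finset.range_one]
    rw [Finset.filter_true_of_mem hall]
    have hcard : (rooms p 0).card = 1 := by
      rw [rooms, Finset.card_product]
      simp [Fintype.card_piFinset, Finset.card_univ, Fintype.card_perm]
    rw [hcard]
    exact odd_one
  | succ k ih =>
    intro ℓ hC0 hC1 hC2
    classical
    set ℓ' : (Fin k → ℕ) → ℕ := fun z => ℓ (Fin.snoc z 0) with hℓ'
    have hcube_snoc : ∀ z : Fin k → ℕ, (∀ i, z i ≤ p) →
        (∀ i, (Fin.snoc z 0 : Fin (k+1) → ℕ) i ≤ p) := by
      intro z hz i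
      refine Fin.lastCases ?_ ?_ i
      · rw [Fin.snoc_last]; omega
      · intro a; rw [Fin.snoc_castSucc]; exact hz a
    have hC0' : ∀ z, (∀ i, z i ≤ p) → ℓ' z ≤ k := by
      intro z hz
      have := hC1 (Fin.snoc z 0) (hcube_snoc z hz) (Fin.last k) (Fin.snoc_last _ _)
      simpa using this
    have hC1' : ∀ z, (∀ i, z i ≤ p) → ∀ i : Fin k, z i = 0 → ℓ' z ≤ (i:ℕ) := by
      intro z hz i hzi
      have := hC1 (Fin.snoc z 0) (hcube_snoc z hz) (Fin.castSucc i)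
        (by rw [Fin.snoc_castSucc]; exact hzi)
      simpa using this
    have hC2' : ∀ z, (∀ i, z i ≤ p) → ∀ i : Fin k, z i = p → ℓ' z ≠ (i:ℕ) := by
      intro z hz i hzi
      have := hC2 (Fin.snoc z 0) (hcube_snoc z hz) (Fin.castSucc i)
        (by rw [Fin.snoc_castSucc]; exact hzi)
      simpa using this
    have hG := ih ℓ' hC0' hC1' hC2'
    set T := ((rooms p (k+1)) ×ˢ (Finset.univ : Finset (Fin (k+2)))).filter
      (fun Rj => (Finset.univ.erase Rj.2).image (fun kk => ℓ (vert Rj.1 kk))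
        = Finset.range (k+1)) with hT
    have stepA : T.card ≡ ((rooms p (k+1)).filter (fun R =>
        Finset.univ.image (fun j => ℓ (vert R j)) = Finset.range (k+2))).card [MOD 2] := by
      rw [hT, Finset.card_filter, Finset.sum_product]
      have hptwise : ∀ R ∈ rooms p (k+1),
          (∑ j : Fin (k+2), if (Finset.univ.erase j).image (fun kk => ℓ (vert R kk))
              = Finset.range (k+1) then 1 else 0) ≡
          (if Finset.univ.image (fun j => ℓ (vert R j)) = Finset.range (k+2) then 1 else 0)
            [MOD 2] := by
        intro R hR
        have hL : ∀ j : Fin (k+2), (fun j => ℓ (vert R j)) j ≤ k+1 :=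
          fun j => hC0 _ (vert_le hR j)
        have hdcp := door_count_parity (k+1) (fun j => ℓ (vert R j)) hL
        rw [Finset.card_filter] at hdcp
        exact hdcp
      calc (∑ R ∈ rooms p (k+1), ∑ j : Fin (k+2),
              if (Finset.univ.erase j).image (fun kk => ℓ (vert R kk))
                = Finset.range (k+1) then 1 else 0)
          ≡ ∑ R ∈ rooms p (k+1), (if Finset.univ.image (fun j => ℓ (vert R j))
              = Finset.range (k+2) then 1 else 0) [MOD 2] :=
            sum_modEq _ _ _ hptwise
        _ = _ := (Finset.card_filter _ _).symm
    -- ============ STEP B : the involution ============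
    have hTmem : ∀ x : ((Fin (k+1) → ℕ) × Equiv.Perm (Fin (k+1))) × Fin (k+2),
        x ∈ T ↔ ((∀ i, x.1.1 i < p) ∧
          (Finset.univ.erase x.2).image (fun kk => ℓ (vert x.1 kk)) = Finset.range (k+1)) := by
      intro x
      rw [hT, Finset.mem_filter, Finset.mem_product]
      simp [mem_rooms]
    -- vertices of rooms lie in the cube
    have hvert_cube : ∀ x : ((Fin (k+1) → ℕ) × Equiv.Perm (Fin (k+1))) × Fin (k+2),
        (∀ i, x.1.1 i < p) → ∀ (kk : Fin (k+2)) (i : Fin (k+1)), vert x.1 kk i ≤ p := by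
      intro x hx kk i
      exact vert_le (mem_rooms.mpr hx) kk i
    have hΦmem : ∀ x ∈ T, flip p x ∈ T := by
      rintro ⟨⟨b, π⟩, j⟩ hx
      rw [hTmem] at hx
      obtain ⟨hb, hdc⟩ := hx
      dsimp only at hb hdc
      by_cases h0 : (j : ℕ) = 0
      · rw [flip_zero p _ h0]
        dsimp only
        by_cases hcond : b (π 0) + 1 < p
        · rw [if_pos hcond, hTmem]
          refine ⟨?_, ?_⟩
          · intro i
            dsimp only
            have := hb i
            by_cases hi : i = π 0
            · rw [if_pos hi, hi]; omega
            · rw [if_neg hi]; omega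
          · dsimp only
            rw [door_image_rot]
            have hj : j = 0 := Fin.ext (by simpa using h0)
            rw [← hj]
            exact hdc
        · rw [if_neg hcond, hTmem]
          exact ⟨hb, hdc⟩
      · by_cases hN : (j : ℕ) = k+1
        · rw [flip_last p _ hN]
          dsimp only
          by_cases hcond : 0 < b (π (Fin.last k))
          · rw [if_pos hcond, hTmem]
            refine ⟨?_, ?_⟩
            · intro i
              dsimp only
              have := hb i
              have := hcond
              split <;> omega
            · dsimp only
              have hπ0 : (π * (finRotate (k+1))⁻¹) 0 = π (Fin.last k) := by
                rw [Equiv.Perm.mul_apply, finRotate_inv_apply, zero_sub_one_eq_last]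
              have hdr := door_image_rot ℓ
                (fun i => b i - if i = π (Fin.last k) then 1 else 0) (π * (finRotate (k+1))⁻¹)
              have hbase : (fun i => (b i - if i = π (Fin.last k) then 1 else 0)
                  + if i = (π * (finRotate (k+1))⁻¹) 0 then 1 else 0) = b := by
                funext i
                rw [hπ0]
                by_cases hi : i = π (Fin.last k)
                · rw [if_pos hi, hi]; omega
                · rw [if_neg hi]; omega
              have hperm : (π * (finRotate (k+1))⁻¹) * finRotate (k+1) = π :=
                inv_mul_cancel_right π (finRotate (k+1))
              rw [hbase, hperm] at hdr
              rw [← hdr]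
              have hj : j = Fin.last (k+1) := Fin.ext (by simpa using hN)
              rw [← hj]
              exact hdc
          · rw [if_neg hcond, hTmem]
            exact ⟨hb, hdc⟩
        · rw [flip_mid p _ h0 hN, hTmem]
          refine ⟨hb, ?_⟩
          dsimp only
          have himg : (Finset.univ.erase j).image
              (fun kk => ℓ (vert (b, π * Equiv.swap
                (⟨(j:ℕ)-1, by have := j.isLt; omega⟩ : Fin (k+1))
                (⟨(j:ℕ), by have := j.isLt; omega⟩ : Fin (k+1))) kk))
              = (Finset.univ.erase j).image (fun kk => ℓ (vert (b, π) kk)) := by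
            apply Finset.image_congr
            intro kk hkk
            have hkkne : kk ≠ j := by
              have := Finset.mem_coe.mp hkk
              exact (Finset.mem_erase.mp this).1
            exact congrArg ℓ (vert_swap b π j h0 hN kk hkkne)
          rw [himg]
          exact hdc
    have hΦΦ : ∀ x ∈ T, flip p (flip p x) = x := by
      rintro ⟨⟨b, π⟩, j⟩ hx
      rw [hTmem] at hx
      obtain ⟨hb, -⟩ := hx
      dsimp only at hb
      by_cases h0 : (j : ℕ) = 0
      · rw [flip_zero p ((b, π), j) h0]
        dsimp only
        by_cases hcond : b (π 0) + 1 < p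
        · rw [if_pos hcond]
          rw [flip_last p _ (by simp)]
          dsimp only
          have happ : (π * finRotate (k+1)) (Fin.last k) = π 0 := by
            rw [Equiv.Perm.mul_apply, finRotate_last]
          rw [happ, if_pos (by rw [if_pos rfl]; omega)]
          simp only [Prod.mk.injEq]
          refine ⟨⟨?_, ?_⟩, ?_⟩
          · funext i
            by_cases hi : i = π 0
            · rw [if_pos hi]; omega
            · rw [if_neg hi]; omega
          · exact mul_inv_cancel_right π (finRotate (k+1))
          · exact (Fin.ext h0.symm : (0 : Fin (k+2)) = j)
        · rw [if_neg hcond]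
          rw [flip_zero p ((b, π), j) h0]
          dsimp only
          rw [if_neg hcond]
      · by_cases hN : (j : ℕ) = k+1
        · rw [flip_last p ((b, π), j) hN]
          dsimp only
          by_cases hcond : 0 < b (π (Fin.last k))
          · rw [if_pos hcond]
            rw [flip_zero p _ (by simp)]
            dsimp only
            have hπ0 : (π * (finRotate (k+1))⁻¹) 0 = π (Fin.last k) := by
              rw [Equiv.Perm.mul_apply, finRotate_inv_apply, zero_sub_one_eq_last]
            rw [hπ0, if_pos (by rw [if_pos rfl]; have := hb (π (Fin.last k)); omega)]
            simp only [Prod.mk.injEq]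
            refine ⟨⟨?_, ?_⟩, ?_⟩
            · funext i
              by_cases hi : i = π (Fin.last k)
              · rw [if_pos hi, hi]; omega
              · rw [if_neg hi]; omega
            · exact inv_mul_cancel_right π (finRotate (k+1))
            · exact (Fin.ext hN.symm : Fin.last (k+1) = j)
          · rw [if_neg hcond]
            rw [flip_last p ((b, π), j) hN]
            dsimp only
            rw [if_neg hcond]
        · rw [flip_mid p ((b, π), j) h0 hN]
          rw [flip_mid p _ h0 hN]
          simp only [Prod.mk.injEq]
          refine ⟨⟨trivial, ?_⟩, trivial⟩
          rw [mul_assoc]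
          rw [Equiv.swap_mul_self]
          exact mul_one π
    have stepB := card_modEq_filter_fixed T (flip p) hΦmem hΦΦ
    have hfix_iff : ∀ x ∈ T, (flip p x = x ↔
        (x.2 = Fin.last (k+1) ∧ x.1.2 (Fin.last k) = Fin.last k ∧ x.1.1 (Fin.last k) = 0)) := by
      rintro ⟨⟨b, π⟩, j⟩ hx
      rw [hTmem] at hx
      obtain ⟨hb, hdc⟩ := hx
      dsimp only at hb hdc
      dsimp only
      constructor
      · intro hfix
        by_cases h0 : (j : ℕ) = 0
        · exfalso
          rw [flip_zero p ((b, π), j) h0] at hfix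
          dsimp only at hfix
          by_cases hcond : b (π 0) + 1 < p
          · rw [if_pos hcond] at hfix
            have hsnd := congrArg Prod.snd hfix
            dsimp only at hsnd
            have hval := congrArg Fin.val hsnd
            rw [Fin.val_last] at hval
            omega
          · have hj : j = 0 := Fin.ext (by simpa using h0)
            subst hj
            have hmem : ((π 0 : Fin (k+1)) : ℕ) ∈ Finset.range (k+1) :=
              Finset.mem_range.mpr (π 0).isLt
            rw [← hdc] at hmem
            obtain ⟨kk, hkkmem, hkkval⟩ := Finset.mem_image.mp hmem
            have hkne : kk ≠ 0 := (Finset.mem_erase.mp hkkmem).1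
            have hvertP : vert (b, π) kk (π 0) = p := by
              unfold vert
              dsimp only
              rw [Equiv.Perm.inv_apply_self]
              rw [if_pos ?_]
              · have := hb (π 0); omega
              · show ((0 : Fin (k+1)) : ℕ) < (kk : ℕ)
                have hne : (kk : ℕ) ≠ 0 := fun hh => hkne (Fin.ext (by simpa using hh))
                simp only [Fin.val_zero]
                omega
            exact hC2 (vert (b, π) kk) (fun i => vert_le (mem_rooms.mpr hb) kk i) (π 0)
              hvertP hkkval
        · by_cases hN : (j : ℕ) = k+1
          · rw [flip_last p ((b, π), j) hN] at hfix
            dsimp only at hfix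
            by_cases hcond : 0 < b (π (Fin.last k))
            · exfalso
              rw [if_pos hcond] at hfix
              have hsnd := congrArg Prod.snd hfix
              dsimp only at hsnd
              have hval := congrArg Fin.val hsnd
              simp only [Fin.val_zero] at hval
              omega
            · have hb0 : b (π (Fin.last k)) = 0 := by omega
              have hj : j = Fin.last (k+1) := Fin.ext (by simpa using hN)
              subst hj
              have hdoor0 : ∀ kk : Fin (k+2), kk ≠ Fin.last (k+1) →
                  vert (b, π) kk (π (Fin.last k)) = 0 := by
                intro kk hkk
                have hkklt : (kk : ℕ) < k + 1 := by
                  have h1 := kk.isLt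
                  have h2 : (kk:ℕ) ≠ k+1 := fun hh => hkk (Fin.ext (by simpa using hh))
                  omega
                unfold vert
                dsimp only
                rw [Equiv.Perm.inv_apply_self, hb0,
                  if_neg (by simp only [Fin.val_last]; omega)]
              have hkmem : (k : ℕ) ∈ Finset.range (k+1) := Finset.mem_range.mpr (by omega)
              rw [← hdc] at hkmem
              obtain ⟨kk, hkkmem, hkkval⟩ := Finset.mem_image.mp hkmem
              have hkne : kk ≠ Fin.last (k+1) := (Finset.mem_erase.mp hkkmem).1
              have hle : ℓ (vert (b, π) kk) ≤ ((π (Fin.last k) : Fin (k+1)) : ℕ) :=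
                hC1 _ (fun i => vert_le (mem_rooms.mpr hb) kk i) _ (hdoor0 kk hkne)
              have hπlast : π (Fin.last k) = Fin.last k := by
                apply Fin.ext
                rw [Fin.val_last]
                have h1 := (π (Fin.last k)).isLt
                rw [hkkval] at hle
                omega
              exact ⟨rfl, hπlast, by rw [← hπlast]; exact hb0⟩
          · exfalso
            rw [flip_mid p ((b, π), j) h0 hN] at hfix
            have hπeq : π * Equiv.swap
                (⟨(j:ℕ)-1, by have := j.isLt; omega⟩ : Fin (k+1))
                (⟨(j:ℕ), by have := j.isLt; omega⟩ : Fin (k+1)) = π :=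
              congrArg (fun z => z.1.2) hfix
            have happ := congrArg
              (fun σ : Equiv.Perm (Fin (k+1)) =>
                σ (⟨(j:ℕ)-1, by have := j.isLt; omega⟩ : Fin (k+1))) hπeq
            simp only [Equiv.Perm.mul_apply, Equiv.swap_apply_left] at happ
            have hinj := π.injective happ
            have hvv := congrArg Fin.val hinj
            simp only at hvv
            omega
      · rintro ⟨hj, hπl, hbl⟩
        rw [flip_last p ((b, π), j) (by rw [hj]; simp)]
        dsimp only
        rw [if_neg (by rw [hπl, hbl]; omega)]
    set G := (rooms p k).filter
      (fun R => Finset.univ.image (fun j => ℓ' (vert R j)) = Finset.range (k+1)) with hGdef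
    have hfixcard : (T.filter (fun x => flip p x = x)).card = G.card := by
      refine Finset.card_bij' (fun x _ => (Fin.init x.1.1, permDown x.1.2))
        (fun R _ => ((Fin.snoc R.1 0, permUp R.2), Fin.last (k+1))) ?hi ?hj ?left ?right
      case hi =>
        rintro ⟨⟨b, π⟩, j⟩ hx
        rw [Finset.mem_filter] at hx
        obtain ⟨hxT, hfix⟩ := hx
        obtain ⟨hj, hπl, hbl⟩ := (hfix_iff _ hxT).mp hfix
        rw [hTmem] at hxT
        obtain ⟨hb, hdc⟩ := hxT
        dsimp only at hb hdc hj hπl hbl ⊢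
        rw [hGdef, Finset.mem_filter]
        refine ⟨mem_rooms.mpr (fun i => hb _), ?_⟩
        have hsnoc : Fin.snoc (Fin.init b) (0:ℕ) = b := by
          rw [← hbl]
          exact Fin.snoc_init_self b
        have hperm : permUp (permDown π) = π := permUp_permDown hπl
        have hdi := door_image_snoc ℓ (Fin.init b) (permDown π)
        rw [hsnoc, hperm] at hdi
        simp only [hℓ']
        rw [← hdi, ← hj]
        exact hdc
      case hj =>
        rintro ⟨b', σ⟩ hR
        rw [hGdef, Finset.mem_filter] at hR
        obtain ⟨hRrooms, hrb⟩ := hR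
        have hT' : ((Fin.snoc b' 0, permUp σ), Fin.last (k+1)) ∈ T := by
          rw [hTmem]
          dsimp only
          constructor
          · intro i
            refine Fin.lastCases ?_ ?_ i
            · rw [Fin.snoc_last]; omega
            · intro a; rw [Fin.snoc_castSucc]; exact mem_rooms.mp hRrooms a
          · rw [door_image_snoc ℓ b' σ]
            simp only [hℓ'] at hrb
            exact hrb
        rw [Finset.mem_filter]
        exact ⟨hT', (hfix_iff _ hT').mpr ⟨rfl, permUp_last σ, by simp⟩⟩
      case left =>
        rintro ⟨⟨b, π⟩, j⟩ hx
        rw [Finset.mem_filter] at hx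
        obtain ⟨hxT, hfix⟩ := hx
        obtain ⟨hj, hπl, hbl⟩ := (hfix_iff _ hxT).mp hfix
        dsimp only at hj hπl hbl ⊢
        have hsnoc : Fin.snoc (Fin.init b) (0:ℕ) = b := by
          rw [← hbl]
          exact Fin.snoc_init_self b
        have hperm : permUp (permDown π) = π := permUp_permDown hπl
        rw [hsnoc, hperm, hj]
      case right =>
        rintro ⟨b', σ⟩ hR
        dsimp only
        rw [Fin.init_snoc, permDown_permUp]
    rw [Nat.odd_iff]
    rw [Nat.odd_iff] at hG
    calc ((rooms p (k+1)).filter (fun R =>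
            Finset.univ.image (fun j => ℓ (vert R j)) = Finset.range (k+2))).card % 2
        = T.card % 2 := stepA.symm
      _ = (T.filter (fun x => flip p x = x)).card % 2 := stepB
      _ = G.card % 2 := by rw [hfixcard]
      _ = 1 := hG



end KuhnDev

open KuhnDev Filter Topology

def cube (n : ℕ) : Set (Fin n → ℝ) := {x | ∀ i, x i ∈ Set.Icc (0:ℝ) 1}

lemma cube_eq_pi (n : ℕ) : cube n = Set.pi Set.univ (fun _ : Fin n => Set.Icc (0:ℝ) 1) := by
  ext x
  simp only [cube, Set.mem_pi, Set.mem_univ, forall_true_left, Set.mem_setOf_eq, true_implies]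

lemma isClosed_cube {n : ℕ} : IsClosed (cube n) := by
  rw [cube_eq_pi]
  exact isClosed_set_pi fun i _ => isClosed_Icc

lemma isCompact_cube {n : ℕ} : IsCompact (cube n) := by
  rw [cube_eq_pi]
  exact isCompact_univ_pi fun i => isCompact_Icc

lemma mem_closed_of_near {X : Type*} [MetricSpace X] {S : Set X} (hS : IsClosed S)
    (x : ℕ → X) (x' : X) (φ : ℕ → ℕ) (hφ : StrictMono φ)
    (hx : Tendsto (x ∘ φ) atTop (𝓝 x'))
    (h : ∀ m, ∃ a ∈ S, dist a (x m) ≤ 1/((m:ℝ)+1)) : x' ∈ S := by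
  choose a ha hd using h
  have htend : Tendsto (fun l => a (φ l)) atTop (𝓝 x') := by
    rw [tendsto_iff_dist_tendsto_zero]
    refine squeeze_zero (g := fun l : ℕ => 1/((l:ℝ)+1) + dist (x (φ l)) x')
      (fun l => dist_nonneg) (fun l => ?_) ?_
    · 
      calc dist (a (φ l)) x' ≤ dist (a (φ l)) (x (φ l)) + dist (x (φ l)) x' :=
            dist_triangle _ _ _
        _ ≤ 1/((l:ℝ)+1) + dist (x (φ l)) x' := by
            have h1 : dist (a (φ l)) (x (φ l)) ≤ 1/((φ l : ℝ)+1) := hd (φ l)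
            have h2 : (1:ℝ)/((φ l : ℝ)+1) ≤ 1/((l:ℝ)+1) := by
              apply one_div_le_one_div_of_le
              · positivity
              · have hlφ : l ≤ φ l := hφ.le_apply
                have hc : ((l:ℝ)) ≤ (φ l : ℝ) := Nat.cast_le.mpr hlφ
                linarith
            linarith
    · have h1 : Tendsto (fun l : ℕ => 1/((l:ℝ)+1)) atTop (𝓝 0) :=
        tendsto_one_div_add_atTop_nhds_zero_nat
      have h2 : Tendsto (fun l => dist (x (φ l)) x') atTop (𝓝 0) :=
        tendsto_iff_dist_tendsto_zero.mp hx
      simpa using h1.add h2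
  exact hS.mem_of_tendsto htend (Filter.Eventually.of_forall (fun l => ha (φ l)))

theorem brouwer_cube {n : ℕ} (g : (Fin n → ℝ) → (Fin n → ℝ)) (hg : Continuous g)
    (hmap : ∀ x ∈ cube n, g x ∈ cube n) :
    ∃ x ∈ cube n, g x = x := by
  classical
  have main : ∀ m : ℕ, ∃ x : Fin n → ℝ, x ∈ cube n ∧
      (∀ i : Fin n, ∃ a ∈ cube n ∩ {y | y i ≤ g y i}, dist a x ≤ 1/((m:ℝ)+1)) ∧
      (∃ b ∈ cube n ∩ {y | ∀ i, g y i ≤ y i ∨ y i = 1}, dist b x ≤ 1/((m:ℝ)+1)) := by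
    intro m
    set p := m + 1 with hpdef
    have hp1 : 1 ≤ p := Nat.le_add_left 1 m
    have hpR : (0:ℝ) < p := by positivity
    set toR : (Fin n → ℕ) → (Fin n → ℝ) := fun z i => (z i : ℝ)/p with htoR
    set bit : Fin n → (Fin n → ℕ) → Prop :=
      fun i z => z i = 0 ∨ (z i ≠ p ∧ (z i : ℝ)/p ≤ g (toR z) i) with hbit
    set lab : (Fin n → ℕ) → ℕ := fun z =>
      if h : (Finset.univ.filter (fun i : Fin n => bit i z)).Nonempty then
        (((Finset.univ.filter (fun i : Fin n => bit i z)).min' h : Fin n) : ℕ)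
      else n with hlab
    have hC0 : ∀ z : Fin n → ℕ, (∀ i, z i ≤ p) → lab z ≤ n := by
      intro z _
      rw [hlab]
      dsimp only
      split
      · exact le_of_lt (Fin.isLt _)
      · exact le_rfl
    have hC1 : ∀ z : Fin n → ℕ, (∀ i, z i ≤ p) → ∀ i : Fin n, z i = 0 → lab z ≤ (i:ℕ) := by
      intro z _ i hzi
      have hne : (Finset.univ.filter (fun i' : Fin n => bit i' z)).Nonempty :=
        ⟨i, Finset.mem_filter.mpr ⟨Finset.mem_univ _, Or.inl hzi⟩⟩
      rw [hlab]
      dsimp only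
      rw [dif_pos hne]
      exact Finset.min'_le _ i (Finset.mem_filter.mpr ⟨Finset.mem_univ _, Or.inl hzi⟩)
    have hC2 : ∀ z : Fin n → ℕ, (∀ i, z i ≤ p) → ∀ i : Fin n, z i = p → lab z ≠ (i:ℕ) := by
      intro z _ i hzi
      have hnbit : ¬ bit i z := by
        intro hb
        have hb' : z i = 0 ∨ (z i ≠ p ∧ (z i : ℝ)/p ≤ g (toR z) i) := hb
        rcases hb' with h | h
        · omega
        · exact h.1 hzi
      rw [hlab]
      dsimp only
      split
      case isTrue hne =>
        intro heq
        have hmin := Finset.min'_mem _ hne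
        have : (Finset.univ.filter (fun i' : Fin n => bit i' z)).min' hne = i := Fin.ext heq
        rw [this] at hmin
        exact hnbit (Finset.mem_filter.mp hmin).2
      case isFalse =>
        have := i.isLt
        omega
    have hodd := kuhn_odd p hp1 n lab hC0 hC1 hC2
    obtain ⟨R, hR⟩ := Finset.card_pos.mp hodd.pos
    rw [Finset.mem_filter] at hR
    obtain ⟨hRrooms, hrb⟩ := hR
    have hcube_vert : ∀ j, toR (vert R j) ∈ cube n := by
      intro j i
      have h1 := vert_le hRrooms j i
      rw [htoR]
      constructor
      · positivity
      · rw [div_le_one hpR]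
        exact_mod_cast h1
    have hdist_vert : ∀ j j', dist (toR (vert R j)) (toR (vert R j')) ≤ 1/((m:ℝ)+1) := by
      intro j j'
      rw [dist_pi_le_iff (by positivity)]
      intro i
      have h1 : vert R j i ≤ R.1 i + 1 ∧ R.1 i ≤ vert R j i := by
        unfold vert; constructor <;> split <;> omega
      have h2 : vert R j' i ≤ R.1 i + 1 ∧ R.1 i ≤ vert R j' i := by
        unfold vert; constructor <;> split <;> omega
      rw [Real.dist_eq, htoR]
      dsimp only
      have habs : |(vert R j i : ℝ)/p - (vert R j' i : ℝ)/p| ≤ 1/(p:ℝ) := by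
        rw [← sub_div, abs_div, abs_of_pos hpR]
        have : |(vert R j i : ℝ) - (vert R j' i : ℝ)| ≤ 1 := by
          rw [abs_sub_le_iff]
          constructor
          · have c1 : (vert R j i : ℝ) ≤ (R.1 i : ℝ) + 1 := by exact_mod_cast h1.1
            have c2 : (R.1 i : ℝ) ≤ (vert R j' i : ℝ) := by exact_mod_cast h2.2
            linarith
          · have c1 : (vert R j' i : ℝ) ≤ (R.1 i : ℝ) + 1 := by exact_mod_cast h2.1
            have c2 : (R.1 i : ℝ) ≤ (vert R j i : ℝ) := by exact_mod_cast h1.2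
            linarith
        gcongr
      have hcast : (p:ℝ) = (m:ℝ) + 1 := by rw [hpdef]; push_cast; ring
      rw [← hcast]
      exact habs
    have hlabel : ∀ c : ℕ, c < n+1 → ∃ j : Fin (n+1), lab (vert R j) = c := by
      intro c hc
      have : c ∈ Finset.range (n+1) := Finset.mem_range.mpr hc
      rw [← hrb] at this
      obtain ⟨j, -, hj⟩ := Finset.mem_image.mp this
      exact ⟨j, hj⟩
    refine ⟨toR (vert R 0), hcube_vert 0, ?_, ?_⟩
    · intro i
      obtain ⟨j, hj⟩ := hlabel (i:ℕ) (by have := i.isLt; omega)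
      have hbi : bit i (vert R j) := by
        rw [hlab] at hj
        dsimp only at hj
        by_cases hne : (Finset.univ.filter (fun i' : Fin n => bit i' (vert R j))).Nonempty
        · rw [dif_pos hne] at hj
          have hmin := Finset.min'_mem _ hne
          have heq : (Finset.univ.filter (fun i' : Fin n => bit i' (vert R j))).min' hne = i :=
            Fin.ext hj
          rw [heq] at hmin
          exact (Finset.mem_filter.mp hmin).2
        · rw [dif_neg hne] at hj
          exact absurd hj (by have := i.isLt; omega)
      refine ⟨toR (vert R j), ⟨hcube_vert j, ?_⟩, hdist_vert j 0⟩
      show toR (vert R j) i ≤ g (toR (vert R j)) i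
      have hbi' : vert R j i = 0 ∨ (vert R j i ≠ p ∧ (vert R j i : ℝ)/p ≤ g (toR (vert R j)) i) :=
        hbi
      rcases hbi' with h | h
      · have hz : toR (vert R j) i = 0 := by rw [htoR]; dsimp only; rw [h]; simp
        rw [hz]
        exact (hmap _ (hcube_vert j) i).1
      · exact h.2
    · obtain ⟨j, hj⟩ := hlabel n (by omega)
      have hnone : ∀ i : Fin n, ¬ bit i (vert R j) := by
        intro i hbi
        have hne : (Finset.univ.filter (fun i' : Fin n => bit i' (vert R j))).Nonempty :=
          ⟨i, Finset.mem_filter.mpr ⟨Finset.mem_univ _, hbi⟩⟩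
        rw [hlab] at hj
        dsimp only at hj
        rw [dif_pos hne] at hj
        have := ((Finset.univ.filter (fun i' : Fin n => bit i' (vert R j))).min' hne).isLt
        omega
      refine ⟨toR (vert R j), ⟨hcube_vert j, ?_⟩, hdist_vert j 0⟩
      intro i
      have hni : ¬ (vert R j i = 0 ∨ (vert R j i ≠ p ∧
          (vert R j i : ℝ)/p ≤ g (toR (vert R j)) i)) := hnone i
      push_neg at hni
      obtain ⟨hz0, h2⟩ := hni
      by_cases hzp : vert R j i = p
      · right
        rw [htoR]
        dsimp only
        rw [hzp]
        field_simp
      · left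
        have hlt := h2 hzp
        exact le_of_lt hlt
  choose x hxcube hA hB using main
  obtain ⟨x', hx'cube, φ, hφmono, hφtend⟩ := isCompact_cube.tendsto_subseq hxcube
  have hAcl : ∀ i : Fin n, IsClosed (cube n ∩ {y : Fin n → ℝ | y i ≤ g y i}) := by
    intro i
    exact isClosed_cube.inter (isClosed_le (continuous_apply i) ((continuous_apply i).comp hg))
  have hBcl : IsClosed (cube n ∩ {y : Fin n → ℝ | ∀ i, g y i ≤ y i ∨ y i = 1}) := by
    apply isClosed_cube.inter
    have : {y : Fin n → ℝ | ∀ i, g y i ≤ y i ∨ y i = 1}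
        = ⋂ i, ({y : Fin n → ℝ | g y i ≤ y i} ∪ {y | y i = 1}) := by
      ext y
      simp [Set.mem_iInter, Set.mem_union]
    rw [this]
    exact isClosed_iInter fun i =>
      (isClosed_le ((continuous_apply i).comp hg) (continuous_apply i)).union
        (isClosed_eq (continuous_apply i) continuous_const)
  have hxA : ∀ i, x' ∈ cube n ∩ {y : Fin n → ℝ | y i ≤ g y i} := by
    intro i
    exact mem_closed_of_near (hAcl i) x x' φ hφmono hφtend (fun m => hA m i)
  have hxB : x' ∈ cube n ∩ {y : Fin n → ℝ | ∀ i, g y i ≤ y i ∨ y i = 1} :=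
    mem_closed_of_near hBcl x x' φ hφmono hφtend hB
  refine ⟨x', hx'cube, ?_⟩
  funext i
  have h1 : x' i ≤ g x' i := (hxA i).2
  rcases hxB.2 i with h2 | h2
  · exact le_antisymm h2 h1
  · have h3 := (hmap x' hx'cube i).2
    rw [h2] at h1 ⊢
    exact le_antisymm h3 h1

noncomputable def retr (n : ℕ) (x : Fin n → ℝ) : Fin n → ℝ :=
  fun i => max (x i) 0 / max (∑ t, max (x t) 0) 1 + max (1 - ∑ t, max (x t) 0) 0 / n

lemma retr_continuous (n : ℕ) : Continuous (retr n) := by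
  apply continuous_pi
  intro i
  apply Continuous.add
  · apply Continuous.div
    · exact (continuous_apply i).max continuous_const
    · exact (continuous_finset_sum _ fun t _ =>
        (continuous_apply t).max continuous_const).max continuous_const
    · intro x
      have h1 : (1:ℝ) ≤ max (∑ t, max (x t) 0) 1 := le_max_right _ _
      intro h
      rw [h] at h1
      linarith
  · exact ((continuous_const.sub (continuous_finset_sum _ fun t _ =>
      (continuous_apply t).max continuous_const)).max continuous_const).div_const _

lemma retr_mem {n : ℕ} (hn : 1 ≤ n) (x : Fin n → ℝ) :
    (∀ i, 0 ≤ retr n x i) ∧ ∑ i, retr n x i = 1 := by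
  set s : ℝ := ∑ t, max (x t) 0 with hs
  have hs0 : 0 ≤ s := Finset.sum_nonneg fun t _ => le_max_right _ _
  have hM : (0:ℝ) < max s 1 := lt_of_lt_of_le one_pos (le_max_right _ _)
  constructor
  · intro i
    apply add_nonneg
    · exact div_nonneg (le_max_right _ _) hM.le
    · exact div_nonneg (le_max_right _ _) (by positivity)
  · have hsum : ∑ i, retr n x i = s / max s 1 + n * (max (1 - s) 0 / n) := by
      unfold retr
      rw [Finset.sum_add_distrib, ← Finset.sum_div, ← hs]
      congr 1
      rw [Finset.sum_const, Finset.card_univ, Fintype.card_fin, nsmul_eq_mul]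
    rw [hsum]
    have hnR : (0:ℝ) < n := by exact_mod_cast hn
    rcases le_or_gt s 1 with h | h
    · rw [max_eq_right h, max_eq_left (by linarith)]
      field_simp
      ring
    · rw [max_eq_left h.le, max_eq_right (by linarith)]
      rw [div_self (by linarith)]
      simp

lemma retr_fix {n : ℕ} (x : Fin n → ℝ) (hx : (∀ i, 0 ≤ x i) ∧ ∑ i, x i = 1) :
    retr n x = x := by
  have hmax : ∀ t, max (x t) 0 = x t := fun t => max_eq_left (hx.1 t)
  have hsum : ∑ t, max (x t) 0 = 1 := by
    rw [Finset.sum_congr rfl fun t _ => hmax t]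
    exact hx.2
  funext i
  unfold retr
  rw [hsum, hmax]
  norm_num

theorem brouwer_simplex {n : ℕ} (hn : 1 ≤ n)
    (g : {x : Fin n → ℝ // (∀ i, 0 ≤ x i) ∧ ∑ i, x i = 1} →
         {x : Fin n → ℝ // (∀ i, 0 ≤ x i) ∧ ∑ i, x i = 1})
    (hg : Continuous g) : ∃ z, g z = z := by
  let r : (Fin n → ℝ) → {x : Fin n → ℝ // (∀ i, 0 ≤ x i) ∧ ∑ i, x i = 1} :=
    fun x => ⟨retr n x, retr_mem hn x⟩
  have hr : Continuous r := Continuous.subtype_mk (retr_continuous n) _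
  let G : (Fin n → ℝ) → (Fin n → ℝ) := fun x => (g (r x)).1
  have hG : Continuous G := continuous_subtype_val.comp (hg.comp hr)
  have hmap : ∀ x ∈ cube n, G x ∈ cube n := by
    intro x _ i
    have hprop := (g (r x)).2
    constructor
    · exact hprop.1 i
    · calc (g (r x)).1 i ≤ ∑ t, (g (r x)).1 t :=
          Finset.single_le_sum (fun t _ => hprop.1 t) (Finset.mem_univ i)
        _ = 1 := hprop.2
  obtain ⟨x, hxc, hfix⟩ := brouwer_cube G hG hmap
  have hxprop : (∀ i, 0 ≤ x i) ∧ ∑ i, x i = 1 := by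
    rw [← hfix]
    exact (g (r x)).2
  have hrx : r x = ⟨x, hxprop⟩ := by
    apply Subtype.ext
    exact retr_fix x hxprop
  refine ⟨r x, Subtype.ext ?_⟩
  show (g (r x)).1 = (r x).1
  have h2 : (r x).1 = x := congrArg Subtype.val hrx
  exact hfix.trans h2.symm

/-- There is no continuous map from the standard simplex
`Δ = {x : Fin n → ℝ | (∀ i, x i ≥ 0) ∧ ∑ i, x i = 1}` to its boundary
`∂Δ = {x ∈ Δ | ∃ i, x i = 0}` mapping each proper face into itself
(a continuous version of Sperner's lemma). -/
theorem no_continuous_retraction_to_boundary (n : ℕ) (hn : 1 ≤ n) :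
    ¬ ∃ f : {x : Fin n → ℝ // (∀ i, 0 ≤ x i) ∧ ∑ i, x i = 1} → (Fin n → ℝ),
        Continuous f ∧
        (∀ x, (∀ i, 0 ≤ f x i) ∧ ∑ i, f x i = 1) ∧
        (∀ x, ∃ i, f x i = 0) ∧
        (∀ x (i : Fin n), x.1 i = 0 → f x i = 0) := by
  obtain ⟨m, rfl⟩ : ∃ m, n = m + 1 := ⟨n - 1, by omega⟩
  rintro ⟨f, hcont, hmem, hbd, hface⟩
  have hsum : ∀ z, ∑ i : Fin (m+1), f z (i + 1) = 1 := by
    intro z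
    rw [← (hmem z).2]
    exact Equiv.sum_comp (Equiv.addRight (1 : Fin (m+1))) (f z)
  let g : {x : Fin (m+1) → ℝ // (∀ i, 0 ≤ x i) ∧ ∑ i, x i = 1} →
      {x : Fin (m+1) → ℝ // (∀ i, 0 ≤ x i) ∧ ∑ i, x i = 1} :=
    fun z => ⟨fun i => f z (i+1), fun i => (hmem z).1 _, hsum z⟩
  have hg : Continuous g := Continuous.subtype_mk
    (continuous_pi fun i => (continuous_apply (i+1)).comp hcont) _
  obtain ⟨z, hz⟩ := brouwer_simplex hn g hg
  have hzi : ∀ i : Fin (m+1), z.1 i = f z (i+1) :=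
    fun i => (congrArg (fun w => w.1 i) hz).symm
  obtain ⟨i0, hi0⟩ := hbd z
  open Fin.NatCast in
  have hall : ∀ k : ℕ, f z (i0 - (k : Fin (m+1))) = 0 := by
    intro k
    induction k with
    | zero => simpa using hi0
    | succ k ihk =>
      have h1 := hzi (i0 - (k : Fin (m+1)) - 1)
      rw [sub_add_cancel] at h1
      have hz0 : z.1 (i0 - (k : Fin (m+1)) - 1) = 0 := by rw [h1]; exact ihk
      have h2 := hface z _ hz0
      have hcast : ((k+1 : ℕ) : Fin (m+1)) = (k : Fin (m+1)) + 1 := by push_cast; ring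
      rw [hcast, show i0 - ((k : Fin (m+1)) + 1) = i0 - (k : Fin (m+1)) - 1 from (sub_sub _ _ _).symm]
      exact h2
  open Fin.NatCast in
  have hzero : ∀ i : Fin (m+1), f z i = 0 := by
    intro i
    have h := hall ((i0 - i : Fin (m+1)) : ℕ)
    rwa [Fin.cast_val_eq_self, sub_sub_cancel] at h
  have hsum1 := (hmem z).2
  rw [Finset.sum_eq_zero fun i _ => hzero i] at hsum1
  exact zero_ne_one hsum1
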